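/- Let G be a countable group acting on ℝ by orientation-preserving homeomorphisms, let y₀ ∈ ℝ, and let G_{y₀} denote the stabilizer of y₀. Assume G_{y₀} ≠ G. Then for every left order λ₀ on G_{y₀} there exist at least two distinct left orders on G whose restriction to G_{y₀} equals λ₀. -/

import Mathlib

/-- A left-invariant strict total order on a group `G`. -/
structure LeftOrder (G : Type*) [Group G] where
  lt : G → G → Prop
  irrefl : ∀ g, ¬ lt g g
  trans : ∀ f g h, lt f g → lt g h → lt f h
  total : ∀ f g, f ≠ g → lt f g ∨ lt g f
  mul_left : ∀ f g h, lt f g → lt (h * f) (h * g)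

/-- The stabilizer of `y₀ ∈ ℝ` for an action `rho : G →* Equiv.Perm ℝ`. -/
def stabilizerSubgroup {G : Type*} [Group G] (rho : G →* Equiv.Perm ℝ) (y₀ : ℝ) :
    Subgroup G where
  carrier := {g : G | rho g y₀ = y₀}
  one_mem' := by simp
  mul_mem' := by
    intro a b ha hb
    simp only [Set.mem_setOf_eq, map_mul, Equiv.Perm.mul_apply] at *
    rw [hb, ha]
  inv_mem' := by
    intro a ha
    simp only [Set.mem_setOf_eq] at *
    calc (rho a⁻¹) y₀ = (rho a⁻¹) ((rho a) y₀) := by rw [ha]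
      _ = (rho (a⁻¹ * a)) y₀ := by rw [map_mul]; rfl
      _ = y₀ := by simp

section Aux

variable {G : Type*} [Group G] (rho : G →* Equiv.Perm ℝ) (y₀ : ℝ)

lemma stab_mem_iff (g : G) : g ∈ stabilizerSubgroup rho y₀ ↔ rho g y₀ = y₀ := Iff.rfl

lemma inv_mul_mem_stab {g h : G} (H : rho g y₀ = rho h y₀) :
    g⁻¹ * h ∈ stabilizerSubgroup rho y₀ := by
  show rho (g⁻¹ * h) y₀ = y₀
  rw [map_mul, Equiv.Perm.mul_apply, ← H, map_inv]
  exact Equiv.symm_apply_apply _ _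

lemma eq_of_inv_mul_mem_stab {g h : G} (H : g⁻¹ * h ∈ stabilizerSubgroup rho y₀) :
    rho g y₀ = rho h y₀ := by
  have : rho (g⁻¹ * h) y₀ = y₀ := H
  rw [map_mul, Equiv.Perm.mul_apply, map_inv] at this
  have := congrArg (rho g) this
  rw [show ∀ x, (rho g) ((rho g)⁻¹ x) = x from (rho g).apply_symm_apply] at this
  exact this.symm

lemma LeftOrder.one_lt_iff {H : Type*} [Group H] (lam₀ : LeftOrder H) (a b : H) :
    lam₀.lt 1 (a⁻¹ * b) ↔ lam₀.lt a b := by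
  constructor
  · intro h
    have := lam₀.mul_left _ _ a h
    simpa using this
  · intro h
    have := lam₀.mul_left _ _ a⁻¹ h
    simpa using this

/-- Build a left order on `G` from a strict order `r` on `ℝ` preserved by the action,
by comparing orbit points of `y₀` and breaking ties using `lam₀`. -/
def mkOrder (lam₀ : LeftOrder ↥(stabilizerSubgroup rho y₀)) (r : ℝ → ℝ → Prop)
    (hirr : ∀ x, ¬ r x x) (htr : ∀ x y z, r x y → r y z → r x z)
    (htot : ∀ x y, x ≠ y → r x y ∨ r y x)
    (hinv : ∀ (g : G) (x y : ℝ), r x y → r (rho g x) (rho g y)) :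
    LeftOrder G where
  lt g h := r (rho g y₀) (rho h y₀) ∨
    ∃ hm : g⁻¹ * h ∈ stabilizerSubgroup rho y₀, lam₀.lt 1 ⟨g⁻¹ * h, hm⟩
  irrefl g := by
    rintro (h | ⟨hm, h⟩)
    · exact hirr _ h
    · have he : (⟨g⁻¹ * g, hm⟩ : ↥(stabilizerSubgroup rho y₀)) = 1 := by
        ext; simp
      rw [he] at h
      exact lam₀.irrefl _ h
  trans f g h := by
    rintro (h1 | ⟨hm1, h1⟩) (h2 | ⟨hm2, h2⟩)
    · exact Or.inl (htr _ _ _ h1 h2)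
    · exact Or.inl (by rw [eq_of_inv_mul_mem_stab rho y₀ hm2] at h1; exact h1)
    · exact Or.inl (by rw [← eq_of_inv_mul_mem_stab rho y₀ hm1] at h2; exact h2)
    · have hm : f⁻¹ * h ∈ stabilizerSubgroup rho y₀ := by
        have := mul_mem hm1 hm2
        simpa [mul_assoc] using this
      refine Or.inr ⟨hm, ?_⟩
      have h3 := lam₀.mul_left _ _ ⟨f⁻¹ * g, hm1⟩ h2
      rw [mul_one] at h3
      have h4 := lam₀.trans _ _ _ h1 h3
      have he : (⟨f⁻¹ * g, hm1⟩ : ↥(stabilizerSubgroup rho y₀)) * ⟨g⁻¹ * h, hm2⟩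
          = ⟨f⁻¹ * h, hm⟩ := by
        ext; simp [mul_assoc]
      rw [he] at h4
      exact h4
  total f g hne := by
    by_cases heq : rho f y₀ = rho g y₀
    · have hm : f⁻¹ * g ∈ stabilizerSubgroup rho y₀ := inv_mul_mem_stab rho y₀ heq
      set x : ↥(stabilizerSubgroup rho y₀) := ⟨f⁻¹ * g, hm⟩ with hx
      have hxne : x ≠ 1 := by
        intro hc
        apply hne
        have : f⁻¹ * g = 1 := congrArg Subtype.val hc
        exact (inv_mul_eq_one.mp this)
      rcases lam₀.total 1 x hxne.symm with h1 | h1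
      · exact Or.inl (Or.inr ⟨hm, h1⟩)
      · have h2 := lam₀.mul_left _ _ x⁻¹ h1
        simp only [mul_one, inv_mul_cancel] at h2
        have hm' : g⁻¹ * f ∈ stabilizerSubgroup rho y₀ :=
          inv_mul_mem_stab rho y₀ heq.symm
        have he : x⁻¹ = (⟨g⁻¹ * f, hm'⟩ : ↥(stabilizerSubgroup rho y₀)) := by
          ext; simp [hx]
        rw [he] at h2
        exact Or.inr (Or.inr ⟨hm', h2⟩)
    · rcases htot _ _ heq with h1 | h1
      · exact Or.inl (Or.inl h1)
      · exact Or.inr (Or.inl h1)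
  mul_left f g h := by
    rintro (h1 | ⟨hm, h1⟩)
    · refine Or.inl ?_
      rw [map_mul, map_mul, Equiv.Perm.mul_apply, Equiv.Perm.mul_apply]
      exact hinv _ _ _ h1
    · have hm' : (h * f)⁻¹ * (h * g) ∈ stabilizerSubgroup rho y₀ := by
        have : (h * f)⁻¹ * (h * g) = f⁻¹ * g := by group
        rw [this]; exact hm
      refine Or.inr ⟨hm', ?_⟩
      have he : (⟨(h * f)⁻¹ * (h * g), hm'⟩ : ↥(stabilizerSubgroup rho y₀))
          = ⟨f⁻¹ * g, hm⟩ := by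
        ext; show (h * f)⁻¹ * (h * g) = f⁻¹ * g; group
      rw [he]
      exact h1

lemma mkOrder_restrict (lam₀ : LeftOrder ↥(stabilizerSubgroup rho y₀)) (r : ℝ → ℝ → Prop)
    (hirr : ∀ x, ¬ r x x) (htr : ∀ x y z, r x y → r y z → r x z)
    (htot : ∀ x y, x ≠ y → r x y ∨ r y x)
    (hinv : ∀ (g : G) (x y : ℝ), r x y → r (rho g x) (rho g y))
    (a b : ↥(stabilizerSubgroup rho y₀)) :
    (mkOrder rho y₀ lam₀ r hirr htr htot hinv).lt ↑a ↑b ↔ lam₀.lt a b := by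
  constructor
  · rintro (h1 | ⟨hm, h1⟩)
    · exfalso
      have ha : rho (a : G) y₀ = y₀ := a.2
      have hb : rho (b : G) y₀ = y₀ := b.2
      rw [ha, hb] at h1
      exact hirr _ h1
    · have he : (⟨(a : G)⁻¹ * (b : G), hm⟩ : ↥(stabilizerSubgroup rho y₀)) = a⁻¹ * b := by
        ext; rfl
      rw [he] at h1
      exact (lam₀.one_lt_iff a b).mp h1
  · intro h1
    have hm : (a : G)⁻¹ * (b : G) ∈ stabilizerSubgroup rho y₀ := (a⁻¹ * b).2
    refine Or.inr ⟨hm, ?_⟩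
    have he : (⟨(a : G)⁻¹ * (b : G), hm⟩ : ↥(stabilizerSubgroup rho y₀)) = a⁻¹ * b := by
      ext; rfl
    rw [he]
    exact (lam₀.one_lt_iff a b).mpr h1

end Aux

/-- Let a countable group `G` act on `ℝ` by orientation-preserving
homeomorphisms, let `y₀ ∈ ℝ`, and assume the stabilizer `G_{y₀}` is a proper subgroup.
Then every left order on `G_{y₀}` extends to at least two distinct left orders on `G`. -/
theorem two_extensions_of_order_on_stabilizer
    {G : Type*} [Group G] [Countable G] (rho : G →* Equiv.Perm ℝ)
    (hmono : ∀ g : G, StrictMono ⇑(rho g)) (y₀ : ℝ)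
    (hproper : stabilizerSubgroup rho y₀ ≠ ⊤)
    (lam₀ : LeftOrder ↥(stabilizerSubgroup rho y₀)) :
    ∃ lam mu : LeftOrder G, lam ≠ mu ∧
      (∀ a b : ↥(stabilizerSubgroup rho y₀), lam.lt ↑a ↑b ↔ lam₀.lt a b) ∧
      (∀ a b : ↥(stabilizerSubgroup rho y₀), mu.lt ↑a ↑b ↔ lam₀.lt a b) := by
  classical
  obtain ⟨g, hg⟩ : ∃ g : G, g ∉ stabilizerSubgroup rho y₀ := by
    by_contra hc
    push_neg at hc
    exact hproper ((Subgroup.eq_top_iff' _).mpr hc)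
  have hgne : rho g y₀ ≠ y₀ := hg
  have hlt_inv : ∀ (k : G) (x y : ℝ), x < y → rho k x < rho k y := fun k x y h => hmono k h
  have hgt_inv : ∀ (k : G) (x y : ℝ), y < x → rho k y < rho k x := fun k x y h => hmono k h
  refine ⟨mkOrder rho y₀ lam₀ (· < ·) (fun x => lt_irrefl x) (fun _ _ _ => lt_trans)
      (fun x y h => h.lt_or_gt) hlt_inv,
    mkOrder rho y₀ lam₀ (fun x y => y < x) (fun x => lt_irrefl x)
      (fun _ _ _ h1 h2 => lt_trans h2 h1) (fun x y h => h.symm.lt_or_gt) hgt_inv,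
    ?_, mkOrder_restrict rho y₀ lam₀ _ _ _ _ _, mkOrder_restrict rho y₀ lam₀ _ _ _ _ _⟩
  intro hcon
  have h1y : rho (1 : G) y₀ = y₀ := by simp
  have hnm : ¬ ∃ hm : (1 : G)⁻¹ * g ∈ stabilizerSubgroup rho y₀,
      lam₀.lt 1 ⟨(1 : G)⁻¹ * g, hm⟩ := by
    rintro ⟨hm, -⟩
    exact hg (by simpa using hm)
  have hnm' : ¬ ∃ hm : g⁻¹ * 1 ∈ stabilizerSubgroup rho y₀,
      lam₀.lt 1 ⟨g⁻¹ * 1, hm⟩ := by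
    rintro ⟨hm, -⟩
    apply hg
    have : g⁻¹ ∈ stabilizerSubgroup rho y₀ := by simpa using hm
    simpa using inv_mem this
  rcases lt_or_gt_of_ne hgne with hlt | hgt
  · -- rho g y₀ < y₀ : lam.lt g 1 holds but mu.lt g 1 fails
    have hl : (mkOrder rho y₀ lam₀ (· < ·) (fun x => lt_irrefl x) (fun _ _ _ => lt_trans)
        (fun x y h => h.lt_or_gt) hlt_inv).lt g 1 := Or.inl (by rw [h1y]; exact hlt)
    rw [hcon] at hl
    rcases hl with h | h
    · rw [h1y] at h; exact absurd hlt (not_lt.mpr h.le)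
    · exact hnm' h
  · have hl : (mkOrder rho y₀ lam₀ (· < ·) (fun x => lt_irrefl x) (fun _ _ _ => lt_trans)
        (fun x y h => h.lt_or_gt) hlt_inv).lt 1 g := Or.inl (by rw [h1y]; exact hgt)
    rw [hcon] at hl
    rcases hl with h | h
    · rw [h1y] at h; exact absurd hgt (not_lt.mpr h.le)
    · exact hnm h
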